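/- For every twice differentiable function F : (0,1) → ℂ^{ℓ+1} and every u ∈ (0,1): (1−u²)(ΨF)″(u) − u·C·(ΨF)′(u) − V·(ΨF)(u) = Ψ(u)·[ (1−u²)F″(u) + (−u·C + S₁)F′(u) + Λ₀·F(u) ]. -/

import Mathlib

namespace Stmt3

/-- The Gegenbauer polynomial `C^{j+1}_{k-j}(u)` (for `0 ≤ j ≤ k`), given by its
terminating hypergeometric expansion. -/
noncomputable def geg (j k : ℕ) (u : ℝ) : ℂ :=
  (Nat.choose (k + j + 1) (k - j) : ℂ) *
    ∑ m ∈ Finset.range (k - j + 1),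
      ((ascPochhammer ℂ m).eval ((j:ℂ) - (k:ℂ)) * (ascPochhammer ℂ m).eval ((k:ℂ) + (j:ℂ) + 2)) /
        ((ascPochhammer ℂ m).eval ((j:ℂ) + 3/2) * (Nat.factorial m : ℂ)) *
        (((1 - u)/2 : ℝ) : ℂ) ^ m

/-- The upper-triangular matrix `Ψ(u)` with entries
`Ψ_{jk}(u) = ((2j+1)(-2i)^j k! j! / (k+j+1)!) C^{j+1}_{k-j}(u)` for `j ≤ k`. -/
noncomputable def PsiM (ℓ : ℕ) (u : ℝ) : Matrix (Fin (ℓ+1)) (Fin (ℓ+1)) ℂ :=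
  Matrix.of fun j k =>
    if (j:ℕ) ≤ (k:ℕ) then
      ((2*((j:ℕ):ℂ) + 1) * (-2*Complex.I)^(j:ℕ) * (Nat.factorial (k:ℕ) : ℂ) *
          (Nat.factorial (j:ℕ) : ℂ) / (Nat.factorial ((k:ℕ) + (j:ℕ) + 1) : ℂ)) * geg j k u
    else 0

/-- `C = Σ_j (2j+3) E_{jj}`. -/
noncomputable def Cmat (ℓ : ℕ) : Matrix (Fin (ℓ+1)) (Fin (ℓ+1)) ℂ :=
  Matrix.diagonal fun j => 2*((j:ℕ):ℂ) + 3

/-- `V = Σ_j j(j+2) E_{jj}`. -/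
noncomputable def Vmat (ℓ : ℕ) : Matrix (Fin (ℓ+1)) (Fin (ℓ+1)) ℂ :=
  Matrix.diagonal fun j => ((j:ℕ):ℂ) * (((j:ℕ):ℂ) + 2)

/-- `S₁ = Σ_{j=0}^{ℓ-1} 2(j+1) E_{j,j+1}`. -/
noncomputable def S1 (ℓ : ℕ) : Matrix (Fin (ℓ+1)) (Fin (ℓ+1)) ℂ :=
  Matrix.of fun j k =>
    if (j:ℕ) + 1 = (k:ℕ) then 2*(((j:ℕ):ℂ) + 1) else 0

/-- `Λ₀ = -Σ_j j(j+2) E_{jj}`. -/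
noncomputable def Lam0 (ℓ : ℕ) : Matrix (Fin (ℓ+1)) (Fin (ℓ+1)) ℂ :=
  Matrix.diagonal fun j => -(((j:ℕ):ℂ) * (((j:ℕ):ℂ) + 2))

/-! ### Auxiliary scalar lemmas -/

section aux
open Polynomial Finset

lemma asc_left (m : ℕ) (x : ℂ) :
    (ascPochhammer ℂ (m+1)).eval x = x * (ascPochhammer ℂ m).eval (x+1) := by
  rw [ascPochhammer_succ_left]
  simp [Polynomial.eval_comp]

lemma asc_pos_ne (j m : ℕ) : (ascPochhammer ℂ m).eval ((j:ℂ)+3/2) ≠ 0 := by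
  induction m with
  | zero => simp
  | succ m ih =>
    rw [ascPochhammer_succ_eval]
    refine mul_ne_zero ih ?_
    have : ((j:ℂ)+3/2+(m:ℂ)) = (((j:ℝ)+3/2+(m:ℝ) : ℝ) : ℂ) := by push_cast; ring
    rw [this, Complex.ofReal_ne_zero]
    positivity

lemma cast32_ne (j m : ℕ) : ((j:ℂ)+3/2+(m:ℂ)) ≠ 0 := by
  have : ((j:ℂ)+3/2+(m:ℂ)) = (((j:ℝ)+3/2+(m:ℝ) : ℝ) : ℂ) := by push_cast; ring
  rw [this, Complex.ofReal_ne_zero]; positivity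

lemma fact_ne (m : ℕ) : ((Nat.factorial m : ℕ):ℂ) ≠ 0 :=
  Nat.cast_ne_zero.2 (Nat.factorial_ne_zero m)

lemma nat_shift_ne (a : ℕ) (r : ℝ) (hr : 0 < r) : ((a:ℂ) + r) ≠ 0 := by
  have : ((a:ℂ)+(r:ℂ)) = (((a:ℝ)+r : ℝ) : ℂ) := by push_cast; ring
  rw [this, Complex.ofReal_ne_zero]; positivity

lemma asc_neg_vanish (n m : ℕ) (h : n < m) : (ascPochhammer ℂ m).eval (-(n:ℂ)) = 0 := by
  obtain ⟨d, rfl⟩ : ∃ d, m = n + 1 + d := ⟨m - (n+1), by omega⟩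
  clear h
  induction d with
  | zero =>
    induction n with
    | zero => simp
    | succ n ih =>
      rw [show n+1+1+0 = (n+1+0)+1 by ring, ascPochhammer_succ_left]
      simp only [Polynomial.eval_mul, Polynomial.eval_comp, Polynomial.eval_add,
        Polynomial.eval_X, Polynomial.eval_one]
      have : -((n+1:ℕ):ℂ) + 1 = -(n:ℂ) := by push_cast; ring
      rw [this, ih, mul_zero]
  | succ d ih =>
    rw [show n+1+(d+1) = (n+1+d)+1 by ring, ascPochhammer_succ_eval, ih, zero_mul]

/-- the hypergeometric coefficient -/
noncomputable def aa (j n m : ℕ) : ℂ :=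
  ((ascPochhammer ℂ m).eval (-(n:ℂ)) * (ascPochhammer ℂ m).eval (2*(j:ℂ)+(n:ℂ)+2)) /
    ((ascPochhammer ℂ m).eval ((j:ℂ)+3/2) * (Nat.factorial m : ℂ))

lemma aa_vanish (j n m : ℕ) (h : n < m) : aa j n m = 0 := by
  simp [aa, asc_neg_vanish n m h]

lemma aa_zero (j n : ℕ) : aa j n 0 = 1 := by
  simp [aa]

lemma recB (j n m : ℕ) :
    ((m:ℂ)+1) * ((m:ℂ) + ((j:ℂ)+3/2)) * aa j n (m+1)
      = ((m:ℂ) - (n:ℂ)) * ((m:ℂ) + (2*(j:ℂ)+(n:ℂ)+2)) * aa j n m := by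
  simp only [aa, ascPochhammer_succ_eval]
  simp only [← mul_div_assoc]
  rw [div_eq_div_iff (mul_ne_zero (mul_ne_zero (asc_pos_ne j m) (cast32_ne j m)) (fact_ne (m+1)))
    (mul_ne_zero (asc_pos_ne j m) (fact_ne m)), Nat.factorial_succ]
  push_cast
  ring

lemma recN (j n m : ℕ) :
    ((m:ℂ)-(n:ℂ)-1) * (2*(j:ℂ)+(n:ℂ)+2) * aa j (n+1) m
      = (-(n:ℂ)-1) * ((2*(j:ℂ)+(n:ℂ)+2)+(m:ℂ)) * aa j n m := by
  have hR1 : (ascPochhammer ℂ m).eval (-(n:ℂ)-1) * ((-(n:ℂ)-1)+(m:ℂ))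
      = (-(n:ℂ)-1) * (ascPochhammer ℂ m).eval (-(n:ℂ)) := by
    rw [← ascPochhammer_succ_eval, asc_left]
    norm_num
  have hR2 : (ascPochhammer ℂ m).eval (2*(j:ℂ)+(n:ℂ)+2) * ((2*(j:ℂ)+(n:ℂ)+2)+(m:ℂ))
      = (2*(j:ℂ)+(n:ℂ)+2) * (ascPochhammer ℂ m).eval ((2*(j:ℂ)+(n:ℂ)+2)+1) := by
    rw [← ascPochhammer_succ_eval, asc_left]
  have c1 : -((n:ℕ)+1:ℂ) = -(n:ℂ)-1 := by ring
  have c2 : 2*(j:ℂ)+((n:ℕ)+1:ℂ)+2 = (2*(j:ℂ)+(n:ℂ)+2)+1 := by ring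
  simp only [aa, Nat.cast_add, Nat.cast_one, c1, c2]
  set u := (ascPochhammer ℂ m).eval (-(n:ℂ)-1)
  set v := (ascPochhammer ℂ m).eval (-(n:ℂ))
  set w := (ascPochhammer ℂ m).eval (2*(j:ℂ)+(n:ℂ)+2)
  set x := (ascPochhammer ℂ m).eval ((2*(j:ℂ)+(n:ℂ)+2)+1)
  set Y := (ascPochhammer ℂ m).eval ((j:ℂ)+3/2)
  have hD : Y * (Nat.factorial m : ℂ) ≠ 0 := mul_ne_zero (asc_pos_ne j m) (fact_ne m)
  rw [← mul_div_assoc, ← mul_div_assoc, div_eq_div_iff hD hD]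
  linear_combination ((2*(j:ℂ)+(n:ℂ)+2)*x*(Y*(Nat.factorial m:ℂ))) * hR1
    - ((-(n:ℂ)-1)*v*(Y*(Nat.factorial m:ℂ))) * hR2

lemma recA (j n m : ℕ) :
    ((n:ℂ)-1-2*(m:ℂ)) * aa j (n+1) (m+1) + 2*((m:ℂ)-(n:ℂ)-1) * aa j (n+1) m
      = ((n:ℂ)+1) * aa j n (m+1) := by
  have hB1 := recB j (n+1) m
  have hB2 := recB j n m
  have hN := recN j n m
  have hm1 : ((m:ℂ)+1) ≠ 0 := Nat.cast_add_one_ne_zero m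
  have hmc : ((m:ℂ) + ((j:ℂ)+3/2)) ≠ 0 := by
    have : ((m:ℂ) + ((j:ℂ)+3/2)) = (((j+m:ℕ)):ℂ) + (3/2 : ℝ) := by push_cast; norm_num; ring
    rw [this]; exact nat_shift_ne _ _ (by norm_num)
  have hn1 : (-(n:ℂ)-1) ≠ 0 := by
    have : (-(n:ℂ)-1) = -(((n:ℂ)) + (1:ℝ)) := by push_cast; ring
    rw [this, neg_ne_zero]; exact nat_shift_ne _ _ one_pos
  have hbm : ((2*(j:ℂ)+(n:ℂ)+2)+(m:ℂ)) ≠ 0 := by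
    have : ((2*(j:ℂ)+(n:ℂ)+2)+(m:ℂ)) = (((2*j+n+m:ℕ)):ℂ) + (2:ℝ) := by push_cast; norm_num; ring
    rw [this]; exact nat_shift_ne _ _ two_pos
  push_cast at hB1
  refine mul_left_cancel₀
    (mul_ne_zero (mul_ne_zero (mul_ne_zero hm1 hmc) hn1) hbm) ?_
  linear_combination
    (((n:ℂ)-1-2*(m:ℂ))*(-(n:ℂ)-1)*((2*(j:ℂ)+(n:ℂ)+2)+(m:ℂ))) * hB1
    - (((n:ℂ)+1)*(-(n:ℂ)-1)*((2*(j:ℂ)+(n:ℂ)+2)+(m:ℂ))) * hB2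
    + (((n:ℂ)+1)*((m:ℂ)-(n:ℂ))*((m:ℂ)+(2*(j:ℂ)+(n:ℂ)+2))) * hN

/-! ### The polynomial sums and their ODE/recurrence identities -/

noncomputable def qf (j n : ℕ) (t : ℂ) : ℂ := ∑ m ∈ Finset.range (n+1), aa j n m * t^m
noncomputable def qd (j n : ℕ) (t : ℂ) : ℂ :=
  ∑ m ∈ Finset.range (n+1), aa j n m * ((m:ℂ) * t^(m-1))
noncomputable def qdd (j n : ℕ) (t : ℂ) : ℂ :=
  ∑ m ∈ Finset.range (n+1), aa j n m * ((m:ℂ) * (((m-1:ℕ):ℂ) * t^(m-1-1)))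

lemma hasDerivAt_qf (j n : ℕ) (t : ℂ) : HasDerivAt (qf j n) (qd j n t) t := by
  unfold qf qd
  exact HasDerivAt.fun_sum fun m _ => (hasDerivAt_pow m t).const_mul _

lemma hasDerivAt_qd (j n : ℕ) (t : ℂ) : HasDerivAt (qd j n) (qdd j n t) t := by
  unfold qd qdd
  exact HasDerivAt.fun_sum fun m _ => (((hasDerivAt_pow (m-1) t).const_mul ((m:ℂ))).const_mul _)

lemma IB (j n : ℕ) (t : ℂ) :
    t*(1-t)*qdd j n t + (((j:ℂ)+3/2) - (2*(j:ℂ)+3)*t)*qd j n t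
      + (n:ℂ)*(2*(j:ℂ)+(n:ℂ)+2)*qf j n t = 0 := by
  have key : t*(1-t)*qdd j n t + (((j:ℂ)+3/2) - (2*(j:ℂ)+3)*t)*qd j n t
      + (n:ℂ)*(2*(j:ℂ)+(n:ℂ)+2)*qf j n t
      = (∑ m ∈ Finset.range (n+1),
          aa j n m * ((m:ℂ)*(((m:ℂ)-1)+((j:ℂ)+3/2))) * t^(m-1))
        - ∑ m ∈ Finset.range (n+1),
          aa j n m * (((m:ℂ)-(n:ℂ))*((m:ℂ)+(2*(j:ℂ)+(n:ℂ)+2))) * t^m := by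
    simp only [qf, qd, qdd, Finset.mul_sum, ← Finset.sum_add_distrib, ← Finset.sum_sub_distrib]
    refine Finset.sum_congr rfl fun m _ => ?_
    match m with
    | 0 => push_cast; ring
    | 1 => push_cast; ring
    | (m+2) =>
      push_cast
      ring
  rw [key, Finset.sum_range_succ'
    (fun m => aa j n m * ((m:ℂ)*(((m:ℂ)-1)+((j:ℂ)+3/2))) * t^(m-1)) n,
    Finset.sum_range_succ
    (fun m => aa j n m * (((m:ℂ)-(n:ℂ))*((m:ℂ)+(2*(j:ℂ)+(n:ℂ)+2))) * t^m) n]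
  have h0 : aa j n 0 * (((0:ℕ):ℂ)*((((0:ℕ):ℂ)-1)+((j:ℂ)+3/2))) * t^(0-1) = 0 := by
    norm_num
  have hn : aa j n n * (((n:ℂ)-(n:ℂ))*((n:ℂ)+(2*(j:ℂ)+(n:ℂ)+2))) * t^n = 0 := by
    norm_num
  rw [h0, hn]
  have step : ∀ m ∈ Finset.range n,
      aa j n (m+1) * ((((m+1:ℕ)):ℂ)*(((((m+1:ℕ)):ℂ)-1)+((j:ℂ)+3/2))) * t^((m+1)-1)
      = aa j n m * (((m:ℂ)-(n:ℂ))*((m:ℂ)+(2*(j:ℂ)+(n:ℂ)+2))) * t^m := by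
    intro m _
    have h := recB j n m
    push_cast
    linear_combination (t^m) * h
  rw [Finset.sum_congr rfl step]
  ring

lemma IA (j n : ℕ) (t : ℂ) :
    -2*t*(1-t)*qd j (n+1) t + ((n:ℂ)+1)*(1-2*t)*qf j (n+1) t
      = ((n:ℂ)+1) * qf j n t := by
  have key : -2*t*(1-t)*qd j (n+1) t + ((n:ℂ)+1)*(1-2*t)*qf j (n+1) t
      = (∑ m ∈ Finset.range (n+2), aa j (n+1) m * (((n:ℂ)+1-2*(m:ℂ))) * t^m)
        + ∑ m ∈ Finset.range (n+2), aa j (n+1) m * (2*((m:ℂ)-(n:ℂ)-1)) * t^(m+1) := by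
    simp only [qf, qd, Finset.mul_sum, ← Finset.sum_add_distrib]
    refine Finset.sum_congr rfl fun m _ => ?_
    match m with
    | 0 => push_cast; ring
    | (m+1) => push_cast; ring
  have hRHS : ((n:ℂ)+1) * qf j n t
      = ((n:ℂ)+1) * aa j n 0
        + ∑ m ∈ Finset.range (n+1), ((n:ℂ)+1) * aa j n (m+1) * t^(m+1) := by
    unfold qf
    have ext : (∑ m ∈ Finset.range (n+1), aa j n m * t^m)
        = ∑ m ∈ Finset.range (n+2), aa j n m * t^m := by
      rw [Finset.sum_range_succ (fun m => aa j n m * t^m) (n+1),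
        aa_vanish j n (n+1) (by omega)]
      ring
    rw [ext, Finset.sum_range_succ' (fun m => aa j n m * t^m) (n+1), mul_add, Finset.mul_sum]
    simp only [pow_zero, mul_one, mul_assoc]
    ring
  rw [key, hRHS]
  rw [Finset.sum_range_succ'
    (fun m => aa j (n+1) m * (((n:ℂ)+1-2*(m:ℂ))) * t^m) (n+1),
    Finset.sum_range_succ
    (fun m => aa j (n+1) m * (2*((m:ℂ)-(n:ℂ)-1)) * t^(m+1)) (n+1)]
  have hz : aa j (n+1) (n+1) * (2*((((n+1:ℕ)):ℂ)-(n:ℂ)-1)) * t^((n+1)+1) = 0 := by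
    push_cast; ring_nf
  rw [hz, add_zero]
  have step : ∀ m ∈ Finset.range (n+1),
      aa j (n+1) (m+1) * (((n:ℂ)+1-2*((((m+1:ℕ)):ℂ)))) * t^(m+1)
        + aa j (n+1) m * (2*((m:ℂ)-(n:ℂ)-1)) * t^(m+1)
      = ((n:ℂ)+1) * aa j n (m+1) * t^(m+1) := by
    intro m _
    have h := recA j n m
    push_cast
    linear_combination (t^(m+1)) * h
  calc (∑ m ∈ Finset.range (n+1),
          aa j (n+1) (m+1) * (((n:ℂ)+1-2*((((m+1:ℕ)):ℂ)))) * t^(m+1))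
        + aa j (n+1) 0 * (((n:ℂ)+1-2*(((0:ℕ)):ℂ))) * t^0
        + ∑ m ∈ Finset.range (n+1), aa j (n+1) m * (2*((m:ℂ)-(n:ℂ)-1)) * t^(m+1)
      = (∑ m ∈ Finset.range (n+1),
          (aa j (n+1) (m+1) * (((n:ℂ)+1-2*((((m+1:ℕ)):ℂ)))) * t^(m+1)
            + aa j (n+1) m * (2*((m:ℂ)-(n:ℂ)-1)) * t^(m+1)))
        + aa j (n+1) 0 * (((n:ℂ)+1-2*(((0:ℕ)):ℂ))) * t^0 := by
        rw [Finset.sum_add_distrib]; ring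
    _ = (∑ m ∈ Finset.range (n+1), ((n:ℂ)+1) * aa j n (m+1) * t^(m+1))
        + aa j (n+1) 0 * (((n:ℂ)+1-2*(((0:ℕ)):ℂ))) * t^0 := by
        rw [Finset.sum_congr rfl step]
    _ = ((n:ℂ)+1) * aa j n 0 + ∑ m ∈ Finset.range (n+1), ((n:ℂ)+1) * aa j n (m+1) * t^(m+1) := by
        rw [aa_zero, aa_zero]
        push_cast
        ring

/-! ### Constants and entry functions -/

noncomputable def NCC (j k : ℕ) : ℂ :=
  ((2*((j:ℕ):ℂ) + 1) * (-2*Complex.I)^(j:ℕ) * (Nat.factorial (k:ℕ) : ℂ) *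
    (Nat.factorial (j:ℕ) : ℂ) / (Nat.factorial ((k:ℕ) + (j:ℕ) + 1) : ℂ)) *
    (Nat.choose (k + j + 1) (k - j) : ℂ)

lemma NCC_closed (j n : ℕ) : NCC j (j+n)
    = (2*(j:ℂ)+1) * (-2*Complex.I)^j * (Nat.factorial (j+n) : ℂ) * (Nat.factorial j : ℂ)
      / ((Nat.factorial n : ℂ) * (Nat.factorial (2*j+1) : ℂ)) := by
  have h1 : j + n + j + 1 = 2*j+n+1 := by omega
  have h2 : j + n - j = n := by omega
  have hc := Nat.choose_mul_factorial_mul_factorial (show n ≤ 2*j+n+1 by omega)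
  rw [show 2*j+n+1-n = 2*j+1 by omega] at hc
  have hcC : (Nat.choose (2*j+n+1) n : ℂ) * (Nat.factorial n : ℂ) * (Nat.factorial (2*j+1) : ℂ)
      = (Nat.factorial (2*j+n+1) : ℂ) := by exact_mod_cast congrArg (Nat.cast (R := ℂ)) hc
  unfold NCC
  rw [h1, h2]
  rw [div_mul_eq_mul_div, div_eq_div_iff (fact_ne _) (mul_ne_zero (fact_ne _) (fact_ne _))]
  linear_combination ((2*(j:ℂ)+1) * (-2*Complex.I)^j * (Nat.factorial (j+n) : ℂ)
    * (Nat.factorial j : ℂ)) * hcC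

lemma NCC_rec (j n : ℕ) : ((n:ℂ)+1) * NCC j (j+(n+1)) = ((j:ℂ)+(n:ℂ)+1) * NCC j (j+n) := by
  have h1 : ((n:ℂ)+1) ≠ 0 := Nat.cast_add_one_ne_zero n
  have hfs : ((Nat.factorial (n+1) : ℕ) : ℂ) = ((n:ℂ)+1) * (Nat.factorial n : ℂ) := by
    rw [Nat.factorial_succ]; push_cast; ring
  have hfs2 : ((Nat.factorial ((j+n)+1) : ℕ) : ℂ)
      = ((j:ℂ)+(n:ℂ)+1) * (Nat.factorial (j+n) : ℂ) := by
    rw [Nat.factorial_succ]; push_cast; ring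
  rw [NCC_closed, NCC_closed, show j+(n+1) = (j+n)+1 from rfl, hfs, hfs2,
    ← mul_div_assoc, ← mul_div_assoc,
    div_eq_div_iff (mul_ne_zero (mul_ne_zero h1 (fact_ne _)) (fact_ne _))
      (mul_ne_zero (fact_ne _) (fact_ne _))]
  ring

noncomputable def Pfun (j k : ℕ) (z : ℂ) : ℂ :=
  if j ≤ k then NCC j k * qf j (k-j) ((1-z)/2) else 0
noncomputable def Pd (j k : ℕ) (z : ℂ) : ℂ :=
  if j ≤ k then NCC j k * (qd j (k-j) ((1-z)/2) * (-(1/2))) else 0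
noncomputable def Pdd (j k : ℕ) (z : ℂ) : ℂ :=
  if j ≤ k then NCC j k * (qdd j (k-j) ((1-z)/2) * (1/4)) else 0

lemma hasDerivAt_inner (z : ℂ) : HasDerivAt (fun z : ℂ => (1-z)/2) (-(1/2)) z := by
  have h := ((hasDerivAt_id z).const_sub 1).div_const 2
  exact h.congr_deriv (by norm_num)

lemma hasDerivAt_Pfun (j k : ℕ) (z : ℂ) : HasDerivAt (Pfun j k) (Pd j k z) z := by
  unfold Pfun Pd
  by_cases h : j ≤ k
  · simp only [if_pos h]
    exact (((hasDerivAt_qf j (k-j) ((1-z)/2)).comp z (hasDerivAt_inner z)).const_mul _)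
  · simp only [if_neg h]
    exact hasDerivAt_const z 0

lemma hasDerivAt_Pd (j k : ℕ) (z : ℂ) : HasDerivAt (Pd j k) (Pdd j k z) z := by
  unfold Pd Pdd
  by_cases h : j ≤ k
  · simp only [if_pos h]
    have h1 := (((hasDerivAt_qd j (k-j) ((1-z)/2)).comp z (hasDerivAt_inner z)).const_mul
      (NCC j k * (-(1/2)) : ℂ))
    simp only [Function.comp] at h1
    have h2 : (fun y => NCC j k * (qd j (k-j) ((1-y)/2) * (-(1/2))))
        = fun y => (NCC j k * (-(1/2))) * qd j (k-j) ((1-y)/2) := by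
      funext y; ring
    rw [h2]
    exact h1.congr_deriv (by ring)
  · simp only [if_neg h]
    exact hasDerivAt_const z 0

lemma qd_zero' (j : ℕ) (t : ℂ) : qd j 0 t = 0 := by simp [qd]

lemma EB (j k : ℕ) (z : ℂ) :
    (1-z^2) * Pdd j k z - (2*(j:ℂ)+3)*z*Pd j k z
      + ((k:ℂ)*((k:ℂ)+2) - (j:ℂ)*((j:ℂ)+2)) * Pfun j k z = 0 := by
  by_cases h : j ≤ k
  · obtain ⟨n, rfl⟩ : ∃ n, k = j + n := ⟨k - j, by omega⟩
    simp only [Pfun, Pd, Pdd, if_pos h, show j+n-j = n by omega]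
    have hIB := IB j n ((1-z)/2)
    push_cast
    linear_combination (NCC j (j+n)) * hIB
  · simp [Pfun, Pd, Pdd, if_neg h]

lemma EA (j k : ℕ) (z : ℂ) :
    2*(1-z^2) * Pd j k z
      = (2*(j:ℂ)-2*(k:ℂ))*z*Pfun j k z + 2*(k:ℂ)*Pfun j (k-1) z := by
  rcases lt_trichotomy j k with hlt | rfl | hgt
  · obtain ⟨n, rfl⟩ : ∃ n, k = j + (n+1) := ⟨k - j - 1, by omega⟩
    have hk1 : j + (n+1) - 1 = j + n := by omega
    simp only [Pfun, Pd, if_pos (show j ≤ j+(n+1) by omega), if_pos (show j ≤ j+n by omega),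
      hk1, show j+(n+1)-j = n+1 by omega, show j+n-j = n by omega]
    have hIA := IA j n ((1-z)/2)
    have hN := NCC_rec j n
    push_cast
    linear_combination (2 * NCC j (j+(n+1))) * hIA + (2 * qf j n ((1-z)/2)) * hN
  · simp only [Pfun, Pd, if_pos (le_refl j), show j-j = 0 by omega, qd_zero']
    rcases Nat.eq_zero_or_pos j with rfl | hj
    · norm_num
    · rw [if_neg (show ¬ j ≤ j - 1 by omega)]
      ring
  · have h1 : ¬ j ≤ k := by omega
    have h2 : ¬ j ≤ k - 1 := by omega
    simp [Pfun, Pd, if_neg h1, if_neg h2]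

/-! ### Matrix forms -/

noncomputable def PsiEM (ℓ : ℕ) (z : ℂ) : Matrix (Fin (ℓ+1)) (Fin (ℓ+1)) ℂ :=
  Matrix.of fun j k => Pfun (j:ℕ) (k:ℕ) z
noncomputable def PsiDM (ℓ : ℕ) (z : ℂ) : Matrix (Fin (ℓ+1)) (Fin (ℓ+1)) ℂ :=
  Matrix.of fun j k => Pd (j:ℕ) (k:ℕ) z
noncomputable def PsiDDM (ℓ : ℕ) (z : ℂ) : Matrix (Fin (ℓ+1)) (Fin (ℓ+1)) ℂ :=
  Matrix.of fun j k => Pdd (j:ℕ) (k:ℕ) z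

lemma geg_eq (j k : ℕ) (h : j ≤ k) (u : ℝ) :
    geg j k u = (Nat.choose (k+j+1) (k-j) : ℂ) * qf j (k-j) ((1-(u:ℂ))/2) := by
  unfold geg qf
  congr 1
  refine Finset.sum_congr rfl fun m _ => ?_
  have h1 : (j:ℂ) - (k:ℂ) = -(((k-j:ℕ)):ℂ) := by rw [Nat.cast_sub h]; ring
  have h2 : (k:ℂ)+(j:ℂ)+2 = 2*(j:ℂ)+((k-j:ℕ):ℂ)+2 := by rw [Nat.cast_sub h]; ring
  have h3 : (((1 - u)/2 : ℝ) : ℂ) = (1-(u:ℂ))/2 := by push_cast; ring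
  rw [h1, h2, h3, aa]

lemma PsiM_eq (ℓ : ℕ) (u : ℝ) : PsiM ℓ u = PsiEM ℓ (u:ℂ) := by
  ext j k
  simp only [PsiM, PsiEM, Matrix.of_apply]
  by_cases h : (j:ℕ) ≤ (k:ℕ)
  · rw [if_pos h, Pfun, if_pos h, geg_eq _ _ h, NCC]
    ring
  · rw [if_neg h, Pfun, if_neg h]

lemma MatB (ℓ : ℕ) (z : ℂ) :
    (1-z^2) • PsiDDM ℓ z - z • (Cmat ℓ * PsiDM ℓ z) - Vmat ℓ * PsiEM ℓ z
      = PsiEM ℓ z * Lam0 ℓ := by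
  ext j k
  simp only [Matrix.sub_apply, Matrix.smul_apply, PsiEM, PsiDM, PsiDDM, Matrix.of_apply,
    Cmat, Vmat, Lam0, Matrix.diagonal_mul, Matrix.mul_diagonal, smul_eq_mul]
  linear_combination EB (j:ℕ) (k:ℕ) z

lemma mulS1 (ℓ : ℕ) (z : ℂ) (j k : Fin (ℓ+1)) :
    (PsiEM ℓ z * S1 ℓ) j k = 2*((k:ℕ):ℂ) * Pfun (j:ℕ) ((k:ℕ)-1) z := by
  rw [Matrix.mul_apply]
  simp only [S1, PsiEM, Matrix.of_apply]
  rcases Nat.eq_zero_or_pos (k:ℕ) with hk | hk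
  · rw [hk]
    rw [Finset.sum_eq_zero]
    · norm_num
    · intro m _
      rw [if_neg (by omega), mul_zero]
  · rw [Finset.sum_eq_single (⟨(k:ℕ)-1, by omega⟩ : Fin (ℓ+1))]
    · rw [if_pos (by simp; omega)]
      have hc : (((k:ℕ)-1 : ℕ) : ℂ) = ((k:ℕ):ℂ) - 1 := by exact_mod_cast Nat.cast_sub (R := ℂ) (by omega : 1 ≤ (k:ℕ))
      show Pfun (j:ℕ) ((k:ℕ)-1) z * (2*((((k:ℕ)-1 : ℕ):ℂ)+1)) = _
      rw [hc]
      ring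
    · intro b _ hb
      have hbv : ¬((b:ℕ)+1 = (k:ℕ)) := by
        intro hc
        apply hb
        apply Fin.ext
        show (b:ℕ) = (k:ℕ)-1
        omega
      rw [if_neg hbv, mul_zero]
    · intro h
      exact absurd (Finset.mem_univ _) h

lemma MatA (ℓ : ℕ) (z : ℂ) :
    (2*(1-z^2)) • PsiDM ℓ z - z • (Cmat ℓ * PsiEM ℓ z)
      = PsiEM ℓ z * ((-z) • Cmat ℓ + S1 ℓ) := by
  ext j k
  rw [Matrix.mul_add, Matrix.add_apply, Matrix.mul_smul, Matrix.smul_apply, mulS1]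
  simp only [Matrix.sub_apply, Matrix.smul_apply, PsiEM, PsiDM, Matrix.of_apply, Cmat,
    Matrix.mul_diagonal, Matrix.diagonal_mul, smul_eq_mul]
  linear_combination EA (j:ℕ) (k:ℕ) z

end aux

/-- Conjugating `D̄ P = (1-u²)P'' - u C P' - V P` by `Ψ` yields the hypergeometric
operator `D̃ F = (1-u²)F'' + (-uC + S₁)F' + Λ₀ F`. -/
theorem conjugation_by_Psi_D (ℓ : ℕ) (F : ℝ → Fin (ℓ+1) → ℂ)
    (hF : ∀ u ∈ Set.Ioo (0:ℝ) 1, DifferentiableAt ℝ F u)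
    (hF' : ∀ u ∈ Set.Ioo (0:ℝ) 1, DifferentiableAt ℝ (deriv F) u)
    (G : ℝ → Fin (ℓ+1) → ℂ)
    (hG : ∀ u, G u = (PsiM ℓ u).mulVec (F u)) :
    ∀ u ∈ Set.Ioo (0:ℝ) 1,
      (1 - (u:ℂ)^2) • deriv (deriv G) u - (u:ℂ) • (Cmat ℓ).mulVec (deriv G u)
          - (Vmat ℓ).mulVec (G u)
        = (PsiM ℓ u).mulVec
            ((1 - (u:ℂ)^2) • deriv (deriv F) u
              + ((-(u:ℂ)) • Cmat ℓ + S1 ℓ).mulVec (deriv F u)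
              + (Lam0 ℓ).mulVec (F u)) := by
  intro u hu
  have hGfun : ∀ i : Fin (ℓ+1), (fun v : ℝ => G v i)
      = fun v : ℝ => ∑ k : Fin (ℓ+1), Pfun (i:ℕ) (k:ℕ) ((v:ℝ):ℂ) * F v k := by
    intro i; funext v
    rw [hG v, PsiM_eq]
    simp [Matrix.mulVec, dotProduct, PsiEM]
  set G1 : ℝ → Fin (ℓ+1) → ℂ := fun v i =>
    ∑ k : Fin (ℓ+1),
      (Pd (i:ℕ) (k:ℕ) ((v:ℝ):ℂ) * F v k + Pfun (i:ℕ) (k:ℕ) ((v:ℝ):ℂ) * deriv F v k)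
    with hG1def
  have hG1 : ∀ v ∈ Set.Ioo (0:ℝ) 1, HasDerivAt G (G1 v) v := by
    intro v hv
    apply hasDerivAt_pi.2
    intro i
    rw [hGfun i]
    refine HasDerivAt.fun_sum fun k _ => ?_
    exact ((hasDerivAt_Pfun (i:ℕ) (k:ℕ) ((v:ℝ):ℂ)).comp_ofReal).mul
      (hasDerivAt_pi.1 (hF v hv).hasDerivAt k)
  have hderivG : ∀ v ∈ Set.Ioo (0:ℝ) 1, deriv G v = G1 v := fun v hv => (hG1 v hv).deriv
  have hev : deriv G =ᶠ[nhds u] G1 :=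
    Filter.eventuallyEq_of_mem (isOpen_Ioo.mem_nhds hu) hderivG
  set G2 : Fin (ℓ+1) → ℂ := fun i =>
    ∑ k : Fin (ℓ+1),
      ((Pdd (i:ℕ) (k:ℕ) ((u:ℝ):ℂ) * F u k + Pd (i:ℕ) (k:ℕ) ((u:ℝ):ℂ) * deriv F u k)
        + (Pd (i:ℕ) (k:ℕ) ((u:ℝ):ℂ) * deriv F u k + Pfun (i:ℕ) (k:ℕ) ((u:ℝ):ℂ) * deriv (deriv F) u k))
    with hG2def
  have hG2 : HasDerivAt G1 G2 u := by
    apply hasDerivAt_pi.2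
    intro i
    refine HasDerivAt.fun_sum fun k _ => ?_
    exact (((hasDerivAt_Pd (i:ℕ) (k:ℕ) ((u:ℝ):ℂ)).comp_ofReal).mul
        (hasDerivAt_pi.1 (hF u hu).hasDerivAt k)).add
      (((hasDerivAt_Pfun (i:ℕ) (k:ℕ) ((u:ℝ):ℂ)).comp_ofReal).mul
        (hasDerivAt_pi.1 (hF' u hu).hasDerivAt k))
  have hd1 : deriv G u = G1 u := hderivG u hu
  have hd2 : deriv (deriv G) u = G2 := by
    calc deriv (deriv G) u = deriv G1 u := hev.deriv_eq
    _ = G2 := hG2.deriv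
  rw [hd1, hd2, hG u, PsiM_eq]
  have e1 : G1 u = (PsiDM ℓ ((u:ℝ):ℂ)).mulVec (F u) + (PsiEM ℓ ((u:ℝ):ℂ)).mulVec (deriv F u) := by
    funext i
    simp only [hG1def, Pi.add_apply, Matrix.mulVec, dotProduct, PsiDM, PsiEM,
      Matrix.of_apply, ← Finset.sum_add_distrib]
  have e2 : G2 = (PsiDDM ℓ ((u:ℝ):ℂ)).mulVec (F u)
      + ((2:ℂ) • ((PsiDM ℓ ((u:ℝ):ℂ)).mulVec (deriv F u)) + (PsiEM ℓ ((u:ℝ):ℂ)).mulVec (deriv (deriv F) u)) := by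
    funext i
    simp only [hG2def, Pi.add_apply, Pi.smul_apply, Matrix.mulVec, dotProduct, PsiDDM, PsiDM,
      PsiEM, Matrix.of_apply, smul_eq_mul, Finset.mul_sum, ← Finset.sum_add_distrib]
    exact Finset.sum_congr rfl fun k _ => by ring
  rw [e1, e2]
  simp only [Matrix.mulVec_add, Matrix.mulVec_smul, Matrix.mulVec_mulVec]
  rw [← MatA ℓ ((u:ℝ):ℂ), ← MatB ℓ ((u:ℝ):ℂ)]
  simp only [Matrix.sub_mulVec, Matrix.smul_mulVec]
  module

end Stmt3
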